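/- Let R be a binary relation on a set X, let λ be an ordinal of countable cofinality, and let c : X → λ be a function. Suppose that for every sequence (x_m)_{m<ω} in X that is strictly R-decreasing (x_{m+1} R x_m for all m) and R-transitive (x_m R x_k for all k < m), one has sup_{m<ω} c(x_m) = λ. Then there is no ω₁-sequence (x_α)_{α<ω₁} in X that is strictly R-decreasing and R-transitive (x_β R x_α for all α < β < ω₁). -/

import Mathlib

open Ordinal Cardinal

/-- Let `R` be a binary relation on `X`, `lam` an ordinal of countable
cofinality, and `c : X → lam`. If every strictly `R`-decreasing and `R`-transitive
ω-sequence in `X` has `sup_m c(x_m) = lam`, then there is no strictly `R`-decreasing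
and `R`-transitive sequence of length `ω₁`. -/
theorem stmt7 {X : Type*} (R : X → X → Prop) (lam : Ordinal)
    (hcof : lam.cof = Cardinal.aleph0) (c : X → Ordinal) (hc : ∀ x, c x < lam)
    (H : ∀ x : ℕ → X, (∀ m, R (x (m + 1)) (x m)) →
      (∀ k m : ℕ, k < m → R (x m) (x k)) → (⨆ m, c (x m)) = lam) :
    ¬ ∃ x : Ordinal → X, ∀ α β : Ordinal, α < β → β < ω₁ → R (x β) (x α) := by
  rintro ⟨x, hx⟩
  have homega1 : Order.IsSuccLimit (ω₁ : Ordinal) := by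
    rw [← Cardinal.ord_aleph]
    exact Cardinal.isSuccLimit_ord (Cardinal.aleph0_le_aleph 1)
  -- extract a cofinal ω-sequence `μ` in `lam`
  obtain ⟨ι, f, hlsub, hι⟩ := Ordinal.exists_lsub_cof lam
  rw [hcof] at hι
  have hcount : Countable ι := Cardinal.mk_le_aleph0_iff.mp hι.le
  have hne : Nonempty ι :=
    Cardinal.mk_ne_zero_iff.mp (by rw [hι]; exact Cardinal.aleph0_ne_zero)
  obtain ⟨s, hs⟩ := exists_surjective_nat ι
  set μ : ℕ → Ordinal := fun n => f (s n) with hμ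
  have hμlt : ∀ n, μ n < lam := fun n => hlsub ▸ Ordinal.lt_lsub f (s n)
  have hμcof : ∀ o, o < lam → ∃ n, o ≤ μ n := by
    intro o ho
    rw [← hlsub, Ordinal.lt_lsub_iff] at ho
    obtain ⟨i, hi⟩ := ho
    obtain ⟨n, rfl⟩ := hs i
    exact ⟨n, hi⟩
  set A : ℕ → Set Ordinal := fun n => {α | α < ω₁ ∧ c (x α) ≤ μ n} with hA
  -- each `A n` is countable
  have hAcount : ∀ n, (A n).Countable := by
    intro n
    by_contra hun
    -- `A n` is "unbounded in itself"
    have hub : ∀ b ∈ A n, ∃ a ∈ A n, b < a := by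
      intro b hb
      by_contra hcon
      push_neg at hcon
      apply hun
      have hsub : A n ⊆ Set.Iio (b + 1) := fun a ha =>
        lt_of_le_of_lt (hcon a ha) (lt_add_one b)
      refine Set.Countable.mono hsub ?_
      rw [Cardinal.countable_iff_lt_aleph_one, Ordinal.mk_Iio_ordinal]
      have h1 : (b + 1 : Ordinal).card < ℵ₁ := by
        rw [← Cardinal.lt_ord, Cardinal.ord_aleph]
        exact homega1.succ_lt hb.1
      have h2 := Cardinal.lift_lt.mpr h1
      rwa [Cardinal.lift_aleph, Ordinal.lift_one] at h2
    have hAne : (A n).Nonempty :=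
      Set.nonempty_iff_ne_empty.mpr (fun h => hun (h ▸ Set.countable_empty))
    -- build a strictly increasing ω-sequence inside `A n`
    let next : A n → A n := fun a => ⟨(hub a a.2).choose, (hub a a.2).choose_spec.1⟩
    have hnext : ∀ a : A n, (a : Ordinal) < next a := fun a => (hub a a.2).choose_spec.2
    let g : ℕ → A n := fun k => next^[k] ⟨hAne.choose, hAne.choose_spec⟩
    have hmono : StrictMono (fun k => (g k : Ordinal)) := by
      apply strictMono_nat_of_lt_succ
      intro k
      show ((g k : Ordinal)) < ((next^[k+1] _ : A n) : Ordinal)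
      rw [Function.iterate_succ_apply']
      exact hnext (g k)
    set y : ℕ → X := fun k => x (g k) with hy
    have hdec : ∀ m, R (y (m + 1)) (y m) := fun m =>
      hx _ _ (hmono (Nat.lt_succ_self m)) (g (m + 1)).2.1
    have htr : ∀ k m : ℕ, k < m → R (y m) (y k) := fun k m hkm =>
      hx _ _ (hmono hkm) (g m).2.1
    have hsup := H y hdec htr
    have hle : (⨆ m, c (y m)) ≤ μ n := ciSup_le' fun m => (g m).2.2
    exact absurd (hsup ▸ hle) (not_le.mpr (hμlt n))
  -- but the `A n` cover `Iio ω₁`, which is uncountable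
  have hcover : Set.Iio (ω₁ : Ordinal) ⊆ ⋃ n, A n := by
    intro α hα
    obtain ⟨n, hn⟩ := hμcof _ (hc (x α))
    exact Set.mem_iUnion.mpr ⟨n, hα, hn⟩
  have hIio : (Set.Iio (ω₁ : Ordinal)).Countable :=
    Set.Countable.mono hcover (Set.countable_iUnion hAcount)
  rw [Cardinal.countable_iff_lt_aleph_one, Ordinal.mk_Iio_ordinal, Ordinal.card_omega,
    Cardinal.lift_aleph, Ordinal.lift_one] at hIio
  exact absurd hIio (lt_irrefl _)
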